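/- Let f: ℤ² → ℂ be a discrete conformal map, i.e., the cross-ratio of every elementary quadrilateral equals -1: ((f(n,m)-f(n+1,m))(f(n+1,m+1)-f(n,m+1)))/((f(n+1,m)-f(n+1,m+1))(f(n,m+1)-f(n,m))) = -1, with all edge differences nonzero. Define g on edges by g_x(n,m) = -1/(f(n+1,m)-f(n,m)) and g_y(n,m) = 1/(f(n,m+1)-f(n,m)). Then g_x and g_y are the x- and y-edge differences of a well-defined function f*: ℤ² → ℂ, i.e., g_x(n,m) + g_y(n+1,m) = g_y(n,m) + g_x(n,m+1) for all (n,m), and f* is also a discrete conformal map. -/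

import Mathlib

/-- A map `f : ℤ² → ℂ` is discrete conformal: all elementary quadrilaterals
have cross-ratio `-1`. -/
def DiscreteConformal (f : ℤ → ℤ → ℂ) : Prop :=
  ∀ n m : ℤ,
    ((f n m - f (n + 1) m) * (f (n + 1) (m + 1) - f n (m + 1))) /
      ((f (n + 1) m - f (n + 1) (m + 1)) * (f n (m + 1) - f n m)) = -1

noncomputable def cumsum (h : ℤ → ℂ) (k : ℤ) : ℂ :=
  (∑ i ∈ Finset.range k.toNat, h i) - ∑ i ∈ Finset.range (-k).toNat, h (-(i + 1 : ℤ))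

lemma cumsum_step (h : ℤ → ℂ) (k : ℤ) : cumsum h (k + 1) - cumsum h k = h k := by
  unfold cumsum
  rcases le_or_gt 0 k with hk | hk
  · have h1 : (k + 1).toNat = k.toNat + 1 := by omega
    have h2 : (-k).toNat = 0 := by omega
    have h3 : (-(k + 1)).toNat = 0 := by omega
    rw [h1, h2, h3, Finset.sum_range_succ]
    simp [Int.toNat_of_nonneg hk]
  · have h1 : (k + 1).toNat = 0 := by omega
    have h2 : k.toNat = 0 := by omega
    have h3 : (-k).toNat = (-(k + 1)).toNat + 1 := by omega
    rw [h1, h2, h3, Finset.sum_range_succ]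
    simp only [Finset.range_zero, Finset.sum_empty]
    rw [show -(((-(k + 1)).toNat : ℤ) + 1) = k from by omega]
    ring

lemma cumsum_zero (h : ℤ → ℂ) : cumsum h 0 = 0 := by
  simp [cumsum]

lemma key (A B C D : ℂ) (hA : A ≠ 0) (hB : B ≠ 0) (hC : C ≠ 0) (hD : D ≠ 0)
    (h : A * C = -(B * D)) (hS : A + B = C + D) : -(1/A) + 1/B = 1/D + -(1/C) := by
  field_simp
  linear_combination (D * B) * hS + (D - B) * h

/-- The dual edge data of a discrete conformal map close up to a well-defined
map `f*`, which is again discrete conformal. -/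
theorem stmt3 (f : ℤ → ℤ → ℂ) (hf : DiscreteConformal f)
    (hx : ∀ n m : ℤ, f (n + 1) m - f n m ≠ 0)
    (hy : ∀ n m : ℤ, f n (m + 1) - f n m ≠ 0)
    (gx gy : ℤ → ℤ → ℂ)
    (hgx : ∀ n m : ℤ, gx n m = -(1 / (f (n + 1) m - f n m)))
    (hgy : ∀ n m : ℤ, gy n m = 1 / (f n (m + 1) - f n m)) :
    (∀ n m : ℤ, gx n m + gy (n + 1) m = gy n m + gx n (m + 1)) ∧
    ∃ fs : ℤ → ℤ → ℂ,
      (∀ n m : ℤ, fs (n + 1) m - fs n m = gx n m) ∧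
      (∀ n m : ℤ, fs n (m + 1) - fs n m = gy n m) ∧
      DiscreteConformal fs := by
  have hprod : ∀ n m : ℤ, (f (n + 1) m - f n m) * (f (n + 1) (m + 1) - f n (m + 1))
      = -((f (n + 1) (m + 1) - f (n + 1) m) * (f n (m + 1) - f n m)) := by
    intro n m
    have h := hf n m
    have h1 : f (n + 1) m - f (n + 1) (m + 1) ≠ 0 := by
      have h2 := hy (n + 1) m
      intro h'; exact h2 (by linear_combination -h')
    rw [div_eq_iff (mul_ne_zero h1 (hy n m))] at h
    linear_combination -h
  have closure : ∀ n m : ℤ, gx n m + gy (n + 1) m = gy n m + gx n (m + 1) := by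
    intro n m
    rw [hgx, hgx, hgy, hgy]
    exact key _ _ _ _ (hx n m) (hy (n + 1) m) (hx n (m + 1)) (hy n m) (hprod n m) (by ring)
  refine ⟨closure, ?_⟩
  set fs : ℤ → ℤ → ℂ := fun n m => cumsum (fun i => gx i 0) n + cumsum (fun j => gy n j) m
    with hfs
  have hsy : ∀ n m : ℤ, fs n (m + 1) - fs n m = gy n m := by
    intro n m
    simp only [hfs]
    have := cumsum_step (fun j => gy n j) m
    linear_combination this
  have hsx : ∀ n m : ℤ, fs (n + 1) m - fs n m = gx n m := by
    intro n
    intro m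
    induction m using Int.induction_on with
    | zero =>
      simp only [hfs, cumsum_zero]
      have := cumsum_step (fun i => gx i 0) n
      linear_combination this
    | succ k ih =>
      have c := closure n k
      have a1 := hsy (n + 1) k
      have a2 := hsy n k
      linear_combination ih + a1 - a2 + c
    | pred k ih =>
      have c := closure n (-k - 1)
      have a1 := hsy (n + 1) (-k - 1)
      have a2 := hsy n (-k - 1)
      have e : (-k - 1 : ℤ) + 1 = -k := by ring
      rw [e] at c a1 a2
      linear_combination ih - a1 + a2 - c
  refine ⟨fs, hsx, hsy, ?_⟩
  intro n m
  have e1 : fs n m - fs (n + 1) m = 1 / (f (n + 1) m - f n m) := by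
    have := hsx n m; rw [hgx] at this; linear_combination -this
  have e2 : fs (n + 1) (m + 1) - fs n (m + 1) = -(1 / (f (n + 1) (m + 1) - f n (m + 1))) := by
    have := hsx n (m + 1); rw [hgx] at this; linear_combination this
  have e3 : fs (n + 1) m - fs (n + 1) (m + 1) = -(1 / (f (n + 1) (m + 1) - f (n + 1) m)) := by
    have := hsy (n + 1) m; rw [hgy] at this; linear_combination -this
  have e4 : fs n (m + 1) - fs n m = 1 / (f n (m + 1) - f n m) := by
    have := hsy n m; rw [hgy] at this; linear_combination this
  rw [e1, e2, e3, e4]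
  have hA := hx n m
  have hB := hy (n + 1) m
  have hC := hx n (m + 1)
  have hD := hy n m
  have hden : -(1 / (f (n + 1) (m + 1) - f (n + 1) m)) * (1 / (f n (m + 1) - f n m)) ≠ 0 :=
    mul_ne_zero (neg_ne_zero.mpr (one_div_ne_zero hB)) (one_div_ne_zero hD)
  rw [div_eq_iff hden]
  field_simp
  linear_combination (-1 : ℂ) * hprod n m
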